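/- arXiv:1806.08429 — 2 statements merged into one kernel-verified Lean document; each statement's English description precedes it below -/
import Mathlib

section
/- Let K/F be a finite Galois extension of number fields, let v be a finite place of K that is unramified over F, and let p be a prime dividing the residue degree deg_F(v). Then there exists an intermediate field K' of K/F with [K:K'] = p such that the place w of K' lying below v is inert in K; that is, v is the unique place of K above w, v is unramified over w, and the residue degree of v over w equals p. -/
open NumberField Module

open scoped Pointwise

section lemmas

lemma exists_galRestrict_map_eq (k K : Type*) [Field k] [Field K] [NumberField k] [NumberField K]
    [Algebra k K] [FiniteDimensional k K] [IsGalois k K]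
    {P Q : Ideal (𝓞 K)} (hP : P.IsPrime) (hQ : Q.IsPrime) (hP0 : P ≠ ⊥) (hQ0 : Q ≠ ⊥)
    (h : P.comap (algebraMap (𝓞 k) (𝓞 K)) = Q.comap (algebraMap (𝓞 k) (𝓞 K))) :
    ∃ σ : K ≃ₐ[k] K, P.map (galRestrict (𝓞 k) k K (𝓞 K) σ) = Q := by
  classical
  by_contra hc
  push_neg at hc
  haveI := hP
  haveI := hQ
  haveI hQm : Q.IsMaximal := hQ.isMaximal hQ0
  have hfP : ∀ σ : K ≃ₐ[k] K, (P.map (galRestrict (𝓞 k) k K (𝓞 K) σ)).IsPrime := fun σ => by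
    rw [show P.map (galRestrict (𝓞 k) k K (𝓞 K) σ)
        = P.comap ((galRestrict (𝓞 k) k K (𝓞 K) σ : 𝓞 K ≃+* 𝓞 K).symm : 𝓞 K →+* 𝓞 K) from
      Ideal.map_comap_of_equiv (galRestrict (𝓞 k) k K (𝓞 K) σ : 𝓞 K ≃+* 𝓞 K)]
    exact Ideal.comap_isPrime _ P
  have hsub : ¬ ((Q : Set (𝓞 K)) ⊆
      ⋃ σ ∈ ((Finset.univ : Finset (K ≃ₐ[k] K)) : Set (K ≃ₐ[k] K)),
        ↑(P.map (galRestrict (𝓞 k) k K (𝓞 K) σ))) := by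
    rw [Ideal.subset_union_prime 1 1 (fun σ _ _ _ => hfP σ)]
    rintro ⟨σ, -, hle⟩
    exact hc σ (hQm.eq_of_le (hfP σ).ne_top hle).symm
  obtain ⟨x, hxQ, hx⟩ := Set.not_subset.mp hsub
  simp only [Set.mem_iUnion, SetLike.mem_coe, not_exists, Finset.mem_univ] at hx
  have h1 : (∏ σ : K ≃ₐ[k] K, galRestrict (𝓞 k) k K (𝓞 K) σ x) ∈ Q := by
    rw [← Finset.mul_prod_erase Finset.univ _ (Finset.mem_univ (1 : K ≃ₐ[k] K))]
    have hone : galRestrict (𝓞 k) k K (𝓞 K) 1 x = x := by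
      rw [map_one]; rfl
    rw [hone]
    exact Ideal.mul_mem_right _ _ hxQ
  rw [prod_galRestrict_eq_norm] at h1
  have h2 : (∏ σ : K ≃ₐ[k] K, galRestrict (𝓞 k) k K (𝓞 K) σ x) ∈ P := by
    rw [prod_galRestrict_eq_norm]
    exact Ideal.mem_comap.mp (h ▸ (Ideal.mem_comap.mpr h1))
  obtain ⟨σ, -, hσ⟩ := Ideal.IsPrime.prod_mem_iff.mp h2
  have hxx : x = galRestrict (𝓞 k) k K (𝓞 K) σ⁻¹ (galRestrict (𝓞 k) k K (𝓞 K) σ x) := by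
    rw [← AlgEquiv.mul_apply, ← map_mul, inv_mul_cancel, map_one]; rfl
  refine hx σ⁻¹ (by simp) ?_
  rw [hxx]
  exact Ideal.mem_map_of_mem _ hσ

open scoped Classical in
lemma mem_primes_over_iff (k K : Type*) [Field k] [Field K] [NumberField k] [NumberField K]
    [Algebra k K] (q : Ideal (𝓞 k)) (hq : q.IsMaximal) (hq0 : q ≠ ⊥) (P : Ideal (𝓞 K)) :
    P ∈ (UniqueFactorizationMonoid.factors (Ideal.map (algebraMap (𝓞 k) (𝓞 K)) q)).toFinset ↔
      P.IsPrime ∧ P ≠ ⊥ ∧ P.comap (algebraMap (𝓞 k) (𝓞 K)) = q := by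
  have hmap0 : Ideal.map (algebraMap (𝓞 k) (𝓞 K)) q ≠ ⊥ := by
    rw [Ne, Ideal.map_eq_bot_iff_of_injective (FaithfulSMul.algebraMap_injective _ _)]
    exact hq0
  rw [Multiset.mem_toFinset, UniqueFactorizationMonoid.factors_eq_normalizedFactors,
    Ideal.mem_normalizedFactors_iff hmap0]
  constructor
  · rintro ⟨h1, h2⟩
    haveI := h1
    have hP0 : P ≠ ⊥ := fun h => hmap0 (le_bot_iff.mp (h ▸ h2))
    exact ⟨h1, hP0,
      (hq.eq_of_le (Ideal.comap_isPrime _ P).ne_top (Ideal.map_le_iff_le_comap.mp h2)).symm⟩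
  · rintro ⟨h1, h2, h3⟩
    exact ⟨h1, Ideal.map_le_iff_le_comap.mpr h3.ge⟩

lemma map_galRestrict_restrictScalars (F K : Type*) [Field F] [Field K] [NumberField F]
    [NumberField K] [Algebra F K] (K' : IntermediateField F K) (τ : K ≃ₐ[K'] K)
    (I : Ideal (𝓞 K)) :
    I.map (galRestrict (𝓞 K') K' K (𝓞 K) τ) =
      I.map (galRestrict (𝓞 F) F K (𝓞 K) (τ.restrictScalars F)) := by
  unfold Ideal.map
  congr 1

end lemmas

/-- Let `K/F` be a finite Galois extension of number fields, `v` a finite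
place of `K` unramified over `F`, and `p` a prime dividing the residue degree of `v` over `F`.
Then there is an intermediate field `K'` of `K/F` with `[K:K'] = p` such that the place `w`
of `K'` below `v` is inert in `K`: `v` is the unique place of `K` above `w`, `v` is
unramified over `w`, and the residue degree of `v` over `w` is `p`. -/
theorem stmt_2 (F K : Type*) [Field F] [Field K] [NumberField F] [NumberField K]
    [Algebra F K] [FiniteDimensional F K] [IsGalois F K]
    (v : Ideal (𝓞 K)) (hv : v.IsPrime) (hv0 : v ≠ ⊥)
    (hunr : Ideal.ramificationIdx'
      (v.comap (algebraMap (𝓞 F) (𝓞 K))) v = 1)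
    (p : ℕ) (hp : p.Prime)
    (hdvd : p ∣ Ideal.inertiaDeg'
      (v.comap (algebraMap (𝓞 F) (𝓞 K))) v) :
    ∃ K' : IntermediateField F K, finrank K' K = p ∧
      (∀ P : Ideal (𝓞 K), P.IsPrime → P ≠ ⊥ →
        P.comap (algebraMap (𝓞 K') (𝓞 K)) = v.comap (algebraMap (𝓞 K') (𝓞 K)) → P = v) ∧
      Ideal.ramificationIdx'
        (v.comap (algebraMap (𝓞 K') (𝓞 K))) v = 1 ∧
      Ideal.inertiaDeg'
        (v.comap (algebraMap (𝓞 K') (𝓞 K))) v = p := by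
  classical
  haveI := hv
  haveI hvm : v.IsMaximal := hv.isMaximal hv0
  set pF := v.comap (algebraMap (𝓞 F) (𝓞 K)) with hpF
  obtain ⟨x0, hx0v, hx00⟩ := Submodule.exists_mem_ne_zero_of_ne_bot hv0
  have hpF0 : pF ≠ ⊥ :=
    Ideal.comap_ne_bot_of_integral_mem hx00 hx0v (Algebra.IsIntegral.isIntegral x0)
  haveI hpFp : pF.IsPrime := Ideal.comap_isPrime _ v
  haveI hpFm : pF.IsMaximal := hpFp.isMaximal hpF0
  -- counting: card of the Galois orbit of `v` equals `g`, and `e f g = n`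
  set G := 𝓞 K ≃ₐ[𝓞 F] 𝓞 K
  set t := (UniqueFactorizationMonoid.factors (pF.map (algebraMap (𝓞 F) (𝓞 K)))).toFinset with htdef
  have hmem : ∀ P, P ∈ t ↔ P.IsPrime ∧ P ≠ ⊥ ∧ P.comap (algebraMap (𝓞 F) (𝓞 K)) = pF := by
    intro P
    rw [htdef]
    convert mem_primes_over_iff F K pF hpFm hpF0 P using 2
  have hvt : v ∈ t := (hmem v).mpr ⟨hv, hv0, rfl⟩
  have hsum := Ideal.sum_ramification_inertia (R := 𝓞 F) (S := 𝓞 K) F K (p := pF) hpF0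
  have hconst : ∀ P ∈ t, Ideal.ramificationIdx' pF P *
      Ideal.inertiaDeg' pF P =
      Ideal.inertiaDeg' pF v := by
    intro P hPt
    obtain ⟨hPp, hP0, hPc⟩ := (hmem P).mp hPt
    obtain ⟨σ, hσ⟩ := exists_galRestrict_map_eq F K hv hPp hv0 hP0 (by rw [hPc])
    rw [← hσ, Ideal.ramificationIdx_map_eq, Ideal.inertiaDeg_map_eq, hunr, one_mul]
  have hcard : t.card * Ideal.inertiaDeg' pF v = finrank F K := by
    rw [← hsum, Finset.sum_congr rfl hconst, Finset.sum_const, smul_eq_mul]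
  -- the orbit of `v` under the Galois action on ideals is `t`
  have hsmul_def : ∀ (σ' : G) (I : Ideal (𝓞 K)), σ' • I = I.map σ' := fun σ' I => rfl
  have horbit : MulAction.orbit G v = ↑t := by
    ext P
    rw [MulAction.mem_orbit_iff]
    constructor
    · rintro ⟨σ', rfl⟩
      rw [Finset.mem_coe, hmem, hsmul_def]
      refine ⟨?_, ?_, ?_⟩
      · rw [show v.map σ' = v.comap ((σ' : 𝓞 K ≃+* 𝓞 K).symm : 𝓞 K →+* 𝓞 K) from
          Ideal.map_comap_of_equiv (σ' : 𝓞 K ≃+* 𝓞 K)]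
        exact Ideal.comap_isPrime _ v
      · rw [Ne, Ideal.map_eq_bot_iff_of_injective (EquivLike.injective σ')]
        exact hv0
      · rw [show v.map σ' = v.comap ((σ' : 𝓞 K ≃+* 𝓞 K).symm : 𝓞 K →+* 𝓞 K) from
          Ideal.map_comap_of_equiv (σ' : 𝓞 K ≃+* 𝓞 K), Ideal.comap_comap]
        rw [hpF]
        congr 1
        exact (σ'.symm.toAlgHom.comp_algebraMap).symm ▸ rfl
    · intro hPt
      obtain ⟨hPp, hP0, hPc⟩ := (hmem P).mp (Finset.mem_coe.mp hPt)
      obtain ⟨σ, hσ⟩ := exists_galRestrict_map_eq F K hv hPp hv0 hP0 (by rw [hPc])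
      exact ⟨galRestrict (𝓞 F) F K (𝓞 K) σ, by rw [hsmul_def]; exact hσ⟩
  -- orbit-stabilizer gives `card (stabilizer) = f`
  haveI : Fintype G := Fintype.ofEquiv _ (galRestrict (𝓞 F) F K (𝓞 K)).toEquiv
  haveI : Fintype (MulAction.orbit G v) := Set.Finite.fintype (Set.finite_range _)
  have hos := MulAction.card_orbit_mul_card_stabilizer_eq_card_group (G := G) v
  have horbcard : Fintype.card (MulAction.orbit G v) = t.card := by
    rw [Fintype.card_congr (Equiv.setCongr horbit)]
    simp
  have hcardG : Fintype.card G = finrank F K := by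
    rw [← IsGalois.card_aut_eq_finrank F K]
    exact (Fintype.card_congr (galRestrict (𝓞 F) F K (𝓞 K)).toEquiv).symm.trans Nat.card_eq_fintype_card.symm
  have ht0 : t.card ≠ 0 := Finset.card_ne_zero_of_mem hvt
  have hstabcard : Fintype.card (MulAction.stabilizer G v) =
      Ideal.inertiaDeg' pF v := by
    apply Nat.eq_of_mul_eq_mul_left (Nat.pos_of_ne_zero ht0)
    rw [← horbcard] at hcard ⊢
    rw [hos, hcardG]
    omega
  -- Cauchy: get `σ` of order `p` in the stabilizer (decomposition group)
  haveI := Fact.mk hp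
  obtain ⟨σ'w, hord⟩ := exists_prime_orderOf_dvd_card p (hstabcard ▸ hdvd)
  have hordσ' : orderOf (σ'w : G) = p := (Subgroup.orderOf_coe σ'w).trans hord
  set σ : K ≃ₐ[F] K := (galRestrict (𝓞 F) F K (𝓞 K)).symm (σ'w : G) with hσdef
  have hgalσ : galRestrict (𝓞 F) F K (𝓞 K) σ = (σ'w : G) :=
    (galRestrict (𝓞 F) F K (𝓞 K)).apply_symm_apply _
  have hordσ : orderOf σ = p := by
    rw [← hordσ', ← hgalσ]
    exact ((galRestrict (𝓞 F) F K (𝓞 K)).orderOf_eq σ).symm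
  set H := Subgroup.zpowers σ with hHdef
  have hstabσ : ∀ τ : K ≃ₐ[F] K, τ ∈ H →
      Ideal.map (galRestrict (𝓞 F) F K (𝓞 K) τ) v = v := by
    intro τ hτ
    obtain ⟨n, rfl⟩ := Subgroup.mem_zpowers_iff.mp hτ
    have h1 : galRestrict (𝓞 F) F K (𝓞 K) (σ ^ n) = (σ'w : G) ^ n := by
      rw [map_zpow, hgalσ]
    rw [← hsmul_def, h1]
    have : ((σ'w : G) ^ n) ∈ MulAction.stabilizer G v :=
      Subgroup.zpow_mem _ σ'w.2 n
    exact this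
  set K' : IntermediateField F K := IntermediateField.fixedField H with hK'def
  have hrank : finrank K' K = p := by
    rw [IntermediateField.finrank_fixedField_eq_card,
      Nat.card_zpowers, hordσ]
  -- any `τ : K ≃ₐ[K'] K` fixes `v`
  have hfix : ∀ τ : K ≃ₐ[K'] K, Ideal.map (galRestrict (𝓞 K') K' K (𝓞 K) τ) v = v := by
    intro τ
    rw [map_galRestrict_restrictScalars F K K' τ v]
    refine hstabσ _ ?_
    rw [← IntermediateField.fixingSubgroup_fixedField H]
    rw [IntermediateField.mem_fixingSubgroup_iff]
    intro x hx
    exact τ.commutes ⟨x, hx⟩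
  set w := v.comap (algebraMap (𝓞 K') (𝓞 K)) with hwdef
  have hw0 : w ≠ ⊥ :=
    Ideal.comap_ne_bot_of_integral_mem hx00 hx0v (Algebra.IsIntegral.isIntegral x0)
  haveI hwp : w.IsPrime := Ideal.comap_isPrime _ v
  haveI hwm : w.IsMaximal := hwp.isMaximal hw0
  have huniq : ∀ P : Ideal (𝓞 K), P.IsPrime → P ≠ ⊥ →
      P.comap (algebraMap (𝓞 K') (𝓞 K)) = w → P = v := by
    intro P hPp hP0 hPc
    obtain ⟨τ, hτ⟩ := exists_galRestrict_map_eq K' K hv hPp hv0 hP0 (by rw [hPc])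
    rw [← hτ, hfix τ]
  have hmapw0 : Ideal.map (algebraMap (𝓞 K') (𝓞 K)) w ≠ ⊥ := by
    rw [Ne, Ideal.map_eq_bot_iff_of_injective (FaithfulSMul.algebraMap_injective _ _)]
    exact hw0
  have hmapF0 : Ideal.map (algebraMap (𝓞 F) (𝓞 K)) pF ≠ ⊥ := by
    rw [Ne, Ideal.map_eq_bot_iff_of_injective (FaithfulSMul.algebraMap_injective _ _)]
    exact hpF0
  have htower := Ideal.ramificationIdx_algebra_tower (R := 𝓞 F) (S := 𝓞 K') (T := 𝓞 K)
    (p := pF) (P := w) (Q := v) hmapw0 hmapF0 Ideal.map_comap_le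
  rw [hunr] at htower
  have he : Ideal.ramificationIdx' w v = 1 :=
    Nat.eq_one_of_mul_eq_one_left htower.symm
  -- inertia degree over `K'`
  have hsum' := Ideal.sum_ramification_inertia (R := 𝓞 K') (S := 𝓞 K) K' K (p := w) hw0
  have ht' : (UniqueFactorizationMonoid.factors
      (Ideal.map (algebraMap (𝓞 K') (𝓞 K)) w)).toFinset = {v} := by
    apply Finset.ext
    intro P
    rw [Finset.mem_singleton]
    constructor
    · intro hPt
      have h := (mem_primes_over_iff K' K w hwm hw0 P).mp (by convert hPt using 2)
      exact huniq P h.1 h.2.1 h.2.2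
    · intro hPv
      rw [hPv]
      convert (mem_primes_over_iff K' K w hwm hw0 v).mpr ⟨hv, hv0, rfl⟩ using 2
  rw [show IsDedekindDomain.primesOverFinset w (𝓞 K) = {v} from ht',
    Finset.sum_singleton, he, one_mul, hrank] at hsum'
  exact ⟨K', hrank, huniq, he, hsum'⟩
end

section
/- Let G be a group and ρ an irreducible complex representation of G on a finite-dimensional complex vector space of dimension n ≥ 1. Then the set of group homomorphisms η: G → ℂˣ such that the twisted representation ρ ⊗ η is isomorphic to ρ has cardinality at most n². -/
open Module

/-- The twist `ρ ⊗ η` of a representation `ρ` of `G` on a complex vector space `V` by a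
character `η : G → ℂˣ`: it acts on the same space by `(ρ ⊗ η)(g) = η(g) • ρ(g)`. -/
def Representation.twist {G V : Type*} [Group G] [AddCommGroup V] [Module ℂ V]
    (ρ : Representation ℂ G V) (η : G →* ℂˣ) : Representation ℂ G V where
  toFun g := (η g : ℂ) • ρ g
  map_one' := by simp
  map_mul' g h := by
    simp only [map_mul, Units.val_mul, smul_mul_smul_comm]

/-- Simultaneous eigenvectors with pairwise distinct eigenvalue functions are
linearly independent. -/
lemma aux_eig_indep {G ι W : Type*} [AddCommGroup W] [Module ℂ W]
    (T : G → W →ₗ[ℂ] W) (χ : ι → G → ℂ) (hχ : Function.Injective χ)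
    (v : ι → W) (hv0 : ∀ i, v i ≠ 0)
    (heig : ∀ i g, T g (v i) = χ i g • v i) :
    LinearIndependent ℂ v := by
  classical
  rw [linearIndependent_iff']
  intro s
  induction s using Finset.strongInduction with
  | _ s ih =>
    intro c hc i hi
    have key : ∀ j ∈ s, j ≠ i → c j = 0 := by
      intro j hjs hji
      have hne : χ j ≠ χ i := fun h => hji (hχ h)
      obtain ⟨g, hg⟩ := Function.ne_iff.mp hne
      have hT : ∑ k ∈ s, (c k * χ k g) • v k = 0 := by
        have h1 := congrArg (T g) hc
        simpa [map_sum, heig, smul_smul, mul_comm] using h1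
      have h3 : ∑ k ∈ s, (c k * χ i g) • v k = 0 := by
        have h2 := congrArg (χ i g • ·) hc
        simp only [Finset.smul_sum, smul_smul, smul_zero] at h2
        simpa [mul_comm] using h2
      have h4 : ∑ k ∈ s, (c k * (χ k g - χ i g)) • v k = 0 := by
        have := sub_eq_zero.mpr (hT.trans h3.symm)
        rw [← Finset.sum_sub_distrib] at this
        simpa [mul_sub, sub_smul] using this
      have h5 : ∑ k ∈ s.erase i, (c k * (χ k g - χ i g)) • v k = 0 := by
        rwa [Finset.sum_erase s (by simp)]
      have h6 := ih (s.erase i) (Finset.erase_ssubset hi) _ h5 j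
        (Finset.mem_erase.mpr ⟨hji, hjs⟩)
      have hsub : χ j g - χ i g ≠ 0 := sub_ne_zero.mpr hg
      exact (mul_eq_zero.mp h6).resolve_right hsub
    have hci : c i • v i = 0 := by
      have hsum := Finset.sum_eq_single (s := s) (f := fun k => c k • v k) i
        (fun b hb hbi => by show c b • v b = 0; rw [key b hb hbi, zero_smul]) (fun h => absurd hi h)
      exact hsum.symm.trans hc
    exact (smul_eq_zero.mp hci).resolve_right (hv0 i)

/-- Let `G` be a group and `ρ` an irreducible complex representation of `G`
on a finite-dimensional complex vector space of dimension `n ≥ 1`.  Then the set of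
homomorphisms `η : G → ℂˣ` such that `ρ ⊗ η ≅ ρ` has cardinality at most `n²`. -/
theorem stmt_9 (G V : Type*) [Group G] [AddCommGroup V] [Module ℂ V] [FiniteDimensional ℂ V]
    (n : ℕ) (hn : 1 ≤ n) (ρ : Representation ℂ G V) (hdim : finrank ℂ V = n)
    (hirr : ∀ U : Submodule ℂ V, (∀ g : G, ∀ v ∈ U, ρ g v ∈ U) → U = ⊥ ∨ U = ⊤) :
    {η : G →* ℂˣ | ∃ e : V ≃ₗ[ℂ] V, ∀ (g : G) (v : V),
        e (ρ g v) = ρ.twist η g (e v)}.Finite ∧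
      {η : G →* ℂˣ | ∃ e : V ≃ₗ[ℂ] V, ∀ (g : G) (v : V),
        e (ρ g v) = ρ.twist η g (e v)}.ncard ≤ n ^ 2 := by
  classical
  set S := {η : G →* ℂˣ | ∃ e : V ≃ₗ[ℂ] V, ∀ (g : G) (v : V),
      e (ρ g v) = ρ.twist η g (e v)} with hS
  have hV : Nontrivial V := by
    have : 0 < finrank ℂ V := by omega
    exact Module.nontrivial_of_finrank_pos this
  -- choice of intertwiner for each η ∈ S
  let e : S → (V →ₗ[ℂ] V) := fun η => (Classical.choose η.2).toLinearMap
  have heq : ∀ (η : S) (g : G) (w : V),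
      (e η) (ρ g w) = (η.1 g : ℂ) • ρ g ((e η) w) := by
    intro η g w
    have := Classical.choose_spec η.2 g w
    simpa [Representation.twist, e] using this
  -- conjugation operators
  let T : G → (V →ₗ[ℂ] V) →ₗ[ℂ] (V →ₗ[ℂ] V) := fun g =>
    { toFun := fun f => ρ g⁻¹ ∘ₗ f ∘ₗ ρ g
      map_add' := fun f₁ f₂ => by ext w; simp
      map_smul' := fun c f => by ext w; simp }
  let χ : S → G → ℂ := fun η g => (η.1 g : ℂ)
  have hχ : Function.Injective χ := by
    intro a b hab
    ext1
    ext g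
    exact congrFun hab g
  have hv0 : ∀ η : S, e η ≠ 0 := by
    intro η h
    obtain ⟨w, hw⟩ := exists_ne (0 : V)
    have h1 : (Classical.choose η.2) w = 0 := by
      have := congrArg (fun f : V →ₗ[ℂ] V => f w) h
      simpa [e] using this
    exact hw ((Classical.choose η.2).map_eq_zero_iff.mp h1)
  have heig : ∀ (η : S) (g : G), T g (e η) = χ η g • e η := by
    intro η g
    ext w
    have hcancel : ∀ x : V, ρ g⁻¹ (ρ g x) = x := by
      intro x
      rw [← Module.End.mul_apply, ← map_mul, inv_mul_cancel, map_one, Module.End.one_apply]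
    simp only [T, LinearMap.coe_mk, AddHom.coe_mk, LinearMap.comp_apply, LinearMap.smul_apply]
    rw [heq η g w, map_smul, hcancel]
  have hind : LinearIndependent ℂ e := aux_eig_indep T χ hχ e hv0 heig
  have hfin : Finite S := Cardinal.mk_lt_aleph0_iff.mp hind.lt_aleph0_of_finite
  have hSfin : S.Finite := Set.finite_coe_iff.mp hfin
  refine ⟨hSfin, ?_⟩
  have hcard : Nat.card S ≤ finrank ℂ (V →ₗ[ℂ] V) := by
    have : Fintype S := hSfin.fintype
    rw [Nat.card_eq_fintype_card]
    exact hind.fintype_card_le_finrank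
  rw [Module.finrank_linearMap, hdim] at hcard
  rw [← Nat.card_coe_set_eq]
  calc Nat.card S ≤ n * n := hcard
    _ = n ^ 2 := (sq n).symm
end
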